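/- Let R be a finite set of rows, each row r ∈ R having a feature vector v_r : F → ℝ and a target t_r ∈ T, and let CP(p) for p ∈ DP_l denote the number of rows r ∈ R such that v_r follows p and t_r = t_p. Suppose x_p ∈ {0,1} and ρ_{j,a} ∈ {0,1} satisfy constraints (alpha) and (gamma). For every leaf l let p_l be the unique path in DP_l with x_{p_l} = 1, define σ(j) as the unique split check with ρ_{j,σ(j)} = 1 for every internal node j, and define τ(l) = t_{p_l}. Then s_{p_l}(j) = σ(j) for every leaf l and every j ∈ p_BT(l), and the objective value ∑_{leaves l} ∑_{p∈DP_l} CP(p) x_p = ∑_{leaves l} CP(p_l) equals the number of rows r ∈ R correctly classified by the decision tree (σ, τ), i.e., rows r whose unique leaf l reached under σ satisfies τ(l) = t_r. -/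

import Mathlib

open Finset

attribute [local instance] Classical.propDecidable

/-- The decision paths for a leaf `l` (a Boolean string of length `k`) of the complete
binary tree of depth `k`: a split check, belonging to the candidate set `S j` of the
corresponding node `j = l.take i`, for every depth `i < k`, together with a target in `T`.
The split check assigned by `p` at the node `l.take i` is `p.1 i` and its target is `p.2`. -/
noncomputable def DP {F T : Type} [Fintype T] (k : ℕ) (S : List Bool → Finset (F × ℝ))
    (l : List Bool) : Finset ((Fin k → F × ℝ) × T) :=
  (Fintype.piFinset fun i : Fin k => S (l.take i.1)) ×ˢ (Finset.univ : Finset T)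

/-- The leaves of the complete binary tree of depth `k`: Boolean strings of length `k`. -/
noncomputable def Leaves (k : ℕ) : Finset (List Bool) :=
  (Finset.univ : Finset (Fin k → Bool)).image List.ofFn

/-- A feature vector `v` follows a decision path `p` for leaf `l`: at every depth `i < k`,
`v` takes the left branch on the split check `p.1 i` iff the bit of `l` following the node
`l.take i` is `false` (i.e. that node is a left child on the path to `l`). -/
def Follows {F T : Type} (k : ℕ) (v : F → ℝ) (l : List Bool)
    (p : (Fin k → F × ℝ) × T) : Prop :=
  ∀ i : Fin k, (v (p.1 i).1 ≤ (p.1 i).2 ↔ l.getD i.1 false = false)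

/-- A feature vector `v` reaches the leaf `l` under the per-node assignment `σ` of split
checks: for every proper prefix `l.take i` of `l`, the bit of `l` immediately following it
is `false` iff `v` takes the left branch on `σ (l.take i)`. -/
def ReachesLeaf {F : Type} (k : ℕ) (v : F → ℝ) (σ : List Bool → F × ℝ)
    (l : List Bool) : Prop :=
  l.length = k ∧ ∀ i : Fin k,
    (l.getD i.1 false = false ↔ v (σ (l.take i.1)).1 ≤ (σ (l.take i.1)).2)

/-- `CP(p)`: the number of rows `r ∈ R` that follow the path `p` (for leaf `l`) and whose
target coincides with the target of `p`. -/
noncomputable def CP {F T ι : Type} (k : ℕ) (R : Finset ι) (v : ι → F → ℝ) (t : ι → T)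
    (l : List Bool) (p : (Fin k → F × ℝ) × T) : ℕ :=
  (R.filter (fun r => Follows k (v r) l p ∧ t r = p.2)).card

lemma mem_Leaves_iff {k : ℕ} {l : List Bool} : l ∈ Leaves k ↔ l.length = k := by
  simp only [Leaves, Finset.mem_image, Finset.mem_univ, true_and]
  constructor
  · rintro ⟨f, rfl⟩; simp
  · rintro rfl
    exact ⟨fun i => l[i.1], by simp [List.ofFn_getElem]⟩

lemma bool_eq_of_false_iff {b c : Bool} (h : (b = false) ↔ (c = false)) : b = c := by
  cases b <;> cases c <;> simp_all

lemma reaches_unique {F : Type} {k : ℕ} {w : F → ℝ} {σ : List Bool → F × ℝ}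
    {l l' : List Bool} (h : ReachesLeaf k w σ l) (h' : ReachesLeaf k w σ l') : l = l' := by
  obtain ⟨hl, hb⟩ := h
  obtain ⟨hl', hb'⟩ := h'
  have key : ∀ i, i ≤ k → l.take i = l'.take i := by
    intro i hi
    induction i with
    | zero => simp
    | succ n ih =>
      have hn : n < k := hi
      have ht : l.take n = l'.take n := ih (le_of_lt hn)
      have h1 : l.take (n+1) = l.take n ++ [l[n]'(by omega)] := by
        rw [List.take_succ]; simp [List.getElem?_eq_getElem (by omega : n < l.length)]
      have h2 : l'.take (n+1) = l'.take n ++ [l'[n]'(by omega)] := by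
        rw [List.take_succ]; simp [List.getElem?_eq_getElem (by omega : n < l'.length)]
      have e1 := hb ⟨n, hn⟩
      have e2 := hb' ⟨n, hn⟩
      rw [ht] at e1
      have egd : (l.getD n false = false) ↔ (l'.getD n false = false) := by
        rw [e1, e2]
      rw [List.getD_eq_getElem?_getD, List.getElem?_eq_getElem (by omega : n < l.length),
        List.getD_eq_getElem?_getD, List.getElem?_eq_getElem (by omega : n < l'.length)] at egd
      simp only [Option.getD_some] at egd
      rw [h1, h2, ht, bool_eq_of_false_iff egd]
  have := key k le_rfl
  rwa [List.take_of_length_le hl.le, List.take_of_length_le hl'.le] at this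

/-- Any binary solution `(x, ρ)` of constraints (alpha) and (gamma) encodes a decision
tree: letting `p_l` be the (unique) path of `DP_l` with `x_{p_l} = 1`, `σ j` the (unique)
split check with `ρ_{j, σ j} = 1`, and `τ l = t_{p_l}`, we have `s_{p_l}(j) = σ j` on
every node of the path to `l`, and the objective value `∑_l ∑_{p ∈ DP_l} CP(p) x_p`
equals `∑_l CP(p_l)`, which equals the number of rows correctly classified by the
decision tree `(σ, τ)`. -/
theorem stmt11 {F T ι : Type} [Fintype F] [Nonempty F] [Fintype T] [Nonempty T]
    (k : ℕ) (hk : 1 ≤ k)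
    (S : List Bool → Finset (F × ℝ))
    (hS : ∀ j : List Bool, j.length < k → (S j).Nonempty)
    (R : Finset ι) (v : ι → F → ℝ) (t : ι → T)
    (x : List Bool → (Fin k → F × ℝ) × T → ℝ)
    (ρ : List Bool → F × ℝ → ℝ)
    -- x and ρ are binary
    (hxbin : ∀ l : List Bool, l.length = k → ∀ p ∈ DP k S l, x l p = 0 ∨ x l p = 1)
    (hρbin : ∀ j : List Bool, j.length < k → ∀ a ∈ S j, ρ j a = 0 ∨ ρ j a = 1)
    -- constraints (alpha)
    (halpha : ∀ l : List Bool, l.length = k → ∑ p ∈ DP k S l, x l p = 1)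
    -- constraints (gamma)
    (hgamma : ∀ l : List Bool, l.length = k → ∀ i : Fin k, ∀ a ∈ S (l.take i.1),
      ∑ p ∈ DP k S l, (if p.1 i = a then x l p else 0) = ρ (l.take i.1) a)
    -- p_l is the path of DP_l selected by x
    (pl : List Bool → (Fin k → F × ℝ) × T)
    (hpl : ∀ l : List Bool, l.length = k → pl l ∈ DP k S l ∧ x l (pl l) = 1)
    -- σ j is the split check of S_j selected by ρ
    (σ : List Bool → F × ℝ)
    (hσ : ∀ j : List Bool, j.length < k → σ j ∈ S j ∧ ρ j (σ j) = 1)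
    -- τ l is the target of the selected path p_l
    (τ : List Bool → T)
    (hτ : ∀ l : List Bool, l.length = k → τ l = (pl l).2) :
    -- the selected paths agree with σ at every node
    (∀ l : List Bool, l.length = k → ∀ i : Fin k, (pl l).1 i = σ (l.take i.1)) ∧
    -- the objective value is ∑_l CP(p_l)
    (∑ l ∈ Leaves k, ∑ p ∈ DP k S l, (CP k R v t l p : ℝ) * x l p =
      ∑ l ∈ Leaves k, (CP k R v t l (pl l) : ℝ)) ∧
    -- and it counts the rows correctly classified by the decision tree (σ, τ)
    (∑ l ∈ Leaves k, (CP k R v t l (pl l) : ℝ) =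
      ((R.filter (fun r => ∃ l : List Bool,
          ReachesLeaf k (v r) σ l ∧ τ l = t r)).card : ℝ)) := by
  
  -- x vanishes off pl
  have hx0 : ∀ l : List Bool, l.length = k → ∀ p ∈ DP k S l, p ≠ pl l → x l p = 0 := by
    intro l hl p hp hne
    have h1 := halpha l hl
    have hmem := (hpl l hl).1
    have hadd := Finset.add_sum_erase (DP k S l) (x l) hmem
    rw [(hpl l hl).2] at hadd
    have hsum : ∑ q ∈ (DP k S l).erase (pl l), x l q = 0 := by
      rw [← hadd] at h1; linarith
    have hnn : ∀ q ∈ (DP k S l).erase (pl l), 0 ≤ x l q := by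
      intro q hq
      rcases hxbin l hl q (Finset.mem_of_mem_erase hq) with h | h <;> simp [h]
    exact (Finset.sum_eq_zero_iff_of_nonneg hnn).1 hsum p (Finset.mem_erase.2 ⟨hne, hp⟩)
  -- part 1 : selected paths agree with σ
  have part1 : ∀ l : List Bool, l.length = k → ∀ i : Fin k, (pl l).1 i = σ (l.take i.1) := by
    intro l hl i
    have hjlen : (l.take i.1).length < k := by
      rw [List.length_take, hl]
      exact lt_of_le_of_lt (min_le_left _ _) i.2
    have hg := hgamma l hl i (σ (l.take i.1)) (hσ _ hjlen).1
    rw [(hσ _ hjlen).2] at hg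
    have hsingle : ∑ p ∈ DP k S l, (if p.1 i = σ (l.take i.1) then x l p else 0) =
        (if (pl l).1 i = σ (l.take i.1) then x l (pl l) else 0) := by
      apply Finset.sum_eq_single
      · intro q hq hne
        rw [hx0 l hl q hq hne]; simp
      · intro h; exact absurd (hpl l hl).1 h
    rw [hsingle, (hpl l hl).2] at hg
    by_contra hne
    rw [if_neg hne] at hg
    norm_num at hg
  refine ⟨part1, ?_, ?_⟩
  · -- part 2 : objective value
    apply Finset.sum_congr rfl
    intro l hl
    have hlk : l.length = k := mem_Leaves_iff.1 hl
    have hss := Finset.sum_eq_single (s := DP k S l)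
      (f := fun p => (CP k R v t l p : ℝ) * x l p) (a := pl l)
      (fun q hq hne => by rw [hx0 l hlk q hq hne]; ring)
      (fun h => absurd (hpl l hlk).1 h)
    rw [(hpl l hlk).2, mul_one] at hss
    exact hss
  · -- part 3 : counting correctly classified rows
    have hfol : ∀ l : List Bool, l.length = k → ∀ w : F → ℝ,
        (Follows k w l (pl l) ↔ ReachesLeaf k w σ l) := by
      intro l hl w
      constructor
      · intro hf
        exact ⟨hl, fun i => by rw [← part1 l hl i]; exact (hf i).symm⟩
      · intro ⟨_, hr⟩ i
        rw [part1 l hl i]; exact (hr i).symm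
    have hCP : ∀ l : List Bool, l.length = k →
        CP k R v t l (pl l) =
          (R.filter (fun r => ReachesLeaf k (v r) σ l ∧ τ l = t r)).card := by
      intro l hl
      unfold CP
      congr 1
      apply Finset.filter_congr
      intro r _
      rw [hfol l hl (v r), hτ l hl, eq_comm]
    have hbU : R.filter (fun r => ∃ l : List Bool, ReachesLeaf k (v r) σ l ∧ τ l = t r) =
        (Leaves k).biUnion (fun l => R.filter (fun r => ReachesLeaf k (v r) σ l ∧ τ l = t r)) := by
      ext r
      simp only [Finset.mem_filter, Finset.mem_biUnion]
      constructor
      · rintro ⟨hr, l, hre, hτl⟩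
        exact ⟨l, mem_Leaves_iff.2 hre.1, hr, hre, hτl⟩
      · rintro ⟨l, _, hr, hre, hτl⟩
        exact ⟨hr, l, hre, hτl⟩
    rw [hbU, Finset.card_biUnion]
    · push_cast
      apply Finset.sum_congr rfl
      intro l hl
      rw [hCP l (mem_Leaves_iff.1 hl)]
    · intro l₁ h₁ l₂ h₂ hne
      apply Finset.disjoint_left.2
      intro r hr₁ hr₂
      simp only [Finset.mem_filter] at hr₁ hr₂
      exact hne (reaches_unique hr₁.2.1 hr₂.2.1)
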